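/- Let F(x1,x2) = H(x1,x2) + f(x1) + g(x2) on ℝ^{d1} × ℝ^{d2}, where H is continuously differentiable and f : ℝ^{d1} → (−∞,∞], g : ℝ^{d2} → (−∞,∞] are proper and lower semicontinuous. Let τ1, τ2 > 0. If x1 is a minimizer of y ↦ (τ1/2)‖(x1 − (1/τ1)∇_{x1}H(x1,x2)) − y‖² + f(y) and x2 is a minimizer of y ↦ (τ2/2)‖(x2 − (1/τ2)∇_{x2}H(x1,x2)) − y‖² + g(y), then (x1,x2) is a critical point of F, i.e., 0 ∈ ∂F(x1,x2), where ∂F is the general (limiting) subdifferential of F. -/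

import Mathlib

open Filter Topology

/-- `v` is a regular subgradient of `f` at `xb`. -/
def RegSubgrad {E : Type*} [NormedAddCommGroup E] [InnerProductSpace ℝ E]
    (f : E → EReal) (xb v : E) : Prop :=
  ∀ ε : ℝ, 0 < ε → ∀ᶠ x in nhds xb,
    f xb + (((inner ℝ v (x - xb) : ℝ) - ε * ‖x - xb‖ : ℝ) : EReal) ≤ f x

/-- `v` is a general (limiting) subgradient of `f` at `xb`. -/
def GenSubgrad {E : Type*} [NormedAddCommGroup E] [InnerProductSpace ℝ E]
    (f : E → EReal) (xb v : E) : Prop :=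
  ∃ xs : ℕ → E, ∃ vs : ℕ → E,
    Tendsto xs atTop (nhds xb) ∧ Tendsto vs atTop (nhds v) ∧
    ∀ k, RegSubgrad f (xs k) (vs k)

/-- the point of `WithLp 2 (E₁ × E₂)` with components `a`, `b`. -/
noncomputable def prodMk {A B : Type*} (a : A) (b : B) : WithLp 2 (A × B) :=
  (WithLp.equiv 2 (A × B)).symm (a, b)

section Aux

variable {E1 E2 : Type*} [NormedAddCommGroup E1] [InnerProductSpace ℝ E1]
  [NormedAddCommGroup E2] [InnerProductSpace ℝ E2]

theorem prodMk_add_prodMk (a : E1) (b : E2) :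
    prodMk a b = prodMk a (0 : E2) + prodMk (0 : E1) b := by
  show (WithLp.equiv 2 _).symm (a, b) =
    (WithLp.equiv 2 _).symm (a, 0) + (WithLp.equiv 2 _).symm (0, b)
  exact congrArg (WithLp.toLp 2) (show ((a, b) : E1 × E2) = (a, 0) + (0, b) by rw [Prod.mk_add_mk, add_zero, zero_add])

theorem sub_prodMk (p : WithLp 2 (E1 × E2)) (a : E1) (b : E2) :
    p - prodMk a b = prodMk (p.fst - a) (p.snd - b) := by
  rfl

theorem norm_sq_prodMk (a : E1) (b : E2) :
    ‖prodMk a b‖ ^ 2 = ‖a‖ ^ 2 + ‖b‖ ^ 2 := by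
  rw [WithLp.prod_norm_sq_eq_of_L2]
  rfl

variable [CompleteSpace E1] [CompleteSpace E2]

theorem partial_grad_fst (H : WithLp 2 (E1 × E2) → ℝ) (hH : ContDiff ℝ 1 H)
    (x1 : E1) (x2 : E2) (w : E1) :
    (inner ℝ (gradient (fun a => H (prodMk a x2)) x1) w : ℝ)
      = fderiv ℝ H (prodMk x1 x2) (prodMk w (0 : E2)) := by
  set e := WithLp.prodContinuousLinearEquiv 2 ℝ E1 E2
  set L1 : E1 →L[ℝ] WithLp 2 (E1 × E2) :=
    (e.symm : (E1 × E2) →L[ℝ] WithLp 2 (E1 × E2)).comp (ContinuousLinearMap.inl ℝ E1 E2)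
  have hcomp : ∀ a : E1, prodMk a x2 = L1 a + prodMk 0 x2 := by
    intro a
    show (WithLp.equiv 2 _).symm (a, x2) =
      (WithLp.equiv 2 _).symm (a, 0) + (WithLp.equiv 2 _).symm (0, x2)
    exact congrArg (WithLp.toLp 2) (show ((a, x2) : E1 × E2) = (a, 0) + (0, x2) by rw [Prod.mk_add_mk, add_zero, zero_add])
  have hHd : HasFDerivAt H (fderiv ℝ H (prodMk x1 x2)) (prodMk x1 x2) :=
    (hH.differentiable one_ne_zero (prodMk x1 x2)).hasFDerivAt
  have hline : HasFDerivAt (fun a : E1 => L1 a + prodMk 0 x2) L1 x1 :=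
    L1.hasFDerivAt.add_const _
  have hx : L1 x1 + prodMk 0 x2 = prodMk x1 x2 := (hcomp x1).symm
  have hφ : HasFDerivAt (fun a : E1 => H (prodMk a x2))
      ((fderiv ℝ H (prodMk x1 x2)).comp L1) x1 := by
    have h1 : HasFDerivAt H (fderiv ℝ H (prodMk x1 x2)) (L1 x1 + prodMk 0 x2) := hx ▸ hHd
    have h2 := h1.comp x1 hline
    refine h2.congr_of_eventuallyEq (Eventually.of_forall fun a => ?_)
    show H (prodMk a x2) = H (L1 a + prodMk 0 x2)
    rw [hcomp a]
  have hgrad : HasGradientAt (fun a : E1 => H (prodMk a x2))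
      ((InnerProductSpace.toDual ℝ E1).symm ((fderiv ℝ H (prodMk x1 x2)).comp L1)) x1 :=
    hφ.hasGradientAt
  rw [hgrad.gradient, InnerProductSpace.toDual_symm_apply]
  rfl

theorem partial_grad_snd (H : WithLp 2 (E1 × E2) → ℝ) (hH : ContDiff ℝ 1 H)
    (x1 : E1) (x2 : E2) (w : E2) :
    (inner ℝ (gradient (fun b => H (prodMk x1 b)) x2) w : ℝ)
      = fderiv ℝ H (prodMk x1 x2) (prodMk (0 : E1) w) := by
  set e := WithLp.prodContinuousLinearEquiv 2 ℝ E1 E2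
  set L2 : E2 →L[ℝ] WithLp 2 (E1 × E2) :=
    (e.symm : (E1 × E2) →L[ℝ] WithLp 2 (E1 × E2)).comp (ContinuousLinearMap.inr ℝ E1 E2)
  have hcomp : ∀ b : E2, prodMk x1 b = L2 b + prodMk x1 (0 : E2) := by
    intro b
    show (WithLp.equiv 2 _).symm (x1, b) =
      (WithLp.equiv 2 _).symm (0, b) + (WithLp.equiv 2 _).symm (x1, 0)
    exact congrArg (WithLp.toLp 2) (show ((x1, b) : E1 × E2) = (0, b) + (x1, 0) by rw [Prod.mk_add_mk, add_zero, zero_add])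
  have hHd : HasFDerivAt H (fderiv ℝ H (prodMk x1 x2)) (prodMk x1 x2) :=
    (hH.differentiable one_ne_zero (prodMk x1 x2)).hasFDerivAt
  have hline : HasFDerivAt (fun b : E2 => L2 b + prodMk x1 (0 : E2)) L2 x2 :=
    L2.hasFDerivAt.add_const _
  have hx : L2 x2 + prodMk x1 (0 : E2) = prodMk x1 x2 := (hcomp x2).symm
  have hφ : HasFDerivAt (fun b : E2 => H (prodMk x1 b))
      ((fderiv ℝ H (prodMk x1 x2)).comp L2) x2 := by
    have h1 : HasFDerivAt H (fderiv ℝ H (prodMk x1 x2)) (L2 x2 + prodMk x1 (0 : E2)) :=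
      hx ▸ hHd
    have h2 := h1.comp x2 hline
    refine h2.congr_of_eventuallyEq (Eventually.of_forall fun b => ?_)
    show H (prodMk x1 b) = H (L2 b + prodMk x1 (0 : E2))
    rw [hcomp b]
  have hgrad : HasGradientAt (fun b : E2 => H (prodMk x1 b))
      ((InnerProductSpace.toDual ℝ E2).symm ((fderiv ℝ H (prodMk x1 x2)).comp L2)) x2 :=
    hφ.hasGradientAt
  rw [hgrad.gradient, InnerProductSpace.toDual_symm_apply]
  rfl

/-- The prox minimizer property yields a proximal subgradient inequality. -/
theorem prox_ineq {E : Type*} [NormedAddCommGroup E] [InnerProductSpace ℝ E]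
    (f : E → EReal) (τ : ℝ) (hτ : 0 < τ) (x v : E)
    (hmin : ∀ y : E, ((τ / 2 * ‖(x - τ⁻¹ • v) - x‖ ^ 2 : ℝ) : EReal) + f x ≤
        ((τ / 2 * ‖(x - τ⁻¹ • v) - y‖ ^ 2 : ℝ) : EReal) + f y) (y : E) :
    f x + ((-(inner ℝ v (y - x) : ℝ) - τ / 2 * ‖y - x‖ ^ 2 : ℝ) : EReal) ≤ f y := by
  set c1 : ℝ := τ / 2 * ‖(x - τ⁻¹ • v) - x‖ ^ 2 with hc1
  set c2 : ℝ := τ / 2 * ‖(x - τ⁻¹ • v) - y‖ ^ 2 with hc2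
  set a : ℝ := -(inner ℝ v (y - x) : ℝ) - τ / 2 * ‖y - x‖ ^ 2 with ha
  have hid : a + c2 = c1 := by
    have h1 : (x - τ⁻¹ • v) - x = -(τ⁻¹ • v) := by abel
    have h2 : (x - τ⁻¹ • v) - y = -(τ⁻¹ • v) - (y - x) := by abel
    have hc1' : c1 = τ / 2 * ‖τ⁻¹ • v‖ ^ 2 := by rw [hc1, h1, norm_neg]
    have hc2' : c2 = τ / 2 * (‖τ⁻¹ • v‖ ^ 2 - 2 * (-(τ⁻¹ * (inner ℝ v (y - x) : ℝ))) + ‖y - x‖ ^ 2) := by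
      rw [hc2, h2, norm_sub_sq_real, norm_neg, inner_neg_left, real_inner_smul_left]
    rw [ha, hc1', hc2']
    field_simp
    ring
  rw [← (EReal.addLECancellable_coe c2).add_le_add_iff_right]
  have hL : f x + (a : EReal) + (c2 : EReal) = (c1 : EReal) + f x := by
    rw [add_assoc, ← EReal.coe_add, hid, add_comm]
  rw [hL]
  calc (c1 : EReal) + f x ≤ (c2 : EReal) + f y := hmin y
    _ = f y + (c2 : EReal) := add_comm _ _

end Aux

set_option maxHeartbeats 1000000 in
/-- if `0` belongs to the generalized gradient `𝒢F_{τ1,τ2}(x1,x2)`, i.e. the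
prox fixed point conditions hold, then `(x1,x2)` is a critical point of
`F = H + f + g`: `0 ∈ ∂F(x1,x2)`. -/
theorem generalized_gradient_zero_critical_point (d1 d2 : ℕ)
    (H : WithLp 2 (EuclideanSpace ℝ (Fin d1) × EuclideanSpace ℝ (Fin d2)) → ℝ)
    (hH : ContDiff ℝ 1 H)
    (f : EuclideanSpace ℝ (Fin d1) → EReal)
    (g : EuclideanSpace ℝ (Fin d2) → EReal)
    (hfbot : ∀ x, f x ≠ ⊥) (hftop : ∃ x, f x ≠ ⊤) (hflsc : LowerSemicontinuous f)
    (hgbot : ∀ x, g x ≠ ⊥) (hgtop : ∃ x, g x ≠ ⊤) (hglsc : LowerSemicontinuous g)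
    (τ1 τ2 : ℝ) (hτ1 : 0 < τ1) (hτ2 : 0 < τ2)
    (x1 : EuclideanSpace ℝ (Fin d1)) (x2 : EuclideanSpace ℝ (Fin d2))
    (hmin1 : ∀ y : EuclideanSpace ℝ (Fin d1),
      ((τ1 / 2 * ‖(x1 - τ1⁻¹ • gradient (fun a => H (prodMk a x2)) x1) - x1‖ ^ 2 : ℝ) : EReal)
          + f x1 ≤
        ((τ1 / 2 * ‖(x1 - τ1⁻¹ • gradient (fun a => H (prodMk a x2)) x1) - y‖ ^ 2 : ℝ) : EReal)
          + f y)
    (hmin2 : ∀ y : EuclideanSpace ℝ (Fin d2),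
      ((τ2 / 2 * ‖(x2 - τ2⁻¹ • gradient (fun b => H (prodMk x1 b)) x2) - x2‖ ^ 2 : ℝ) : EReal)
          + g x2 ≤
        ((τ2 / 2 * ‖(x2 - τ2⁻¹ • gradient (fun b => H (prodMk x1 b)) x2) - y‖ ^ 2 : ℝ) : EReal)
          + g y) :
    GenSubgrad
      (fun p => (H p : EReal) + f ((WithLp.equiv 2 _) p).1 + g ((WithLp.equiv 2 _) p).2)
      (prodMk x1 x2) 0 := by
  classical
  set g1 := gradient (fun a => H (prodMk a x2)) x1 with hg1def
  set g2 := gradient (fun b => H (prodMk x1 b)) x2 with hg2def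
  set xb := prodMk x1 x2 with hxb
  set D := fderiv ℝ H xb with hD
  -- prox subgradient inequalities
  have key1 : ∀ y : EuclideanSpace ℝ (Fin d1),
      f x1 + ((-(inner ℝ g1 (y - x1) : ℝ) - τ1 / 2 * ‖y - x1‖ ^ 2 : ℝ) : EReal) ≤ f y :=
    prox_ineq f τ1 hτ1 x1 g1 hmin1
  have key2 : ∀ y : EuclideanSpace ℝ (Fin d2),
      g x2 + ((-(inner ℝ g2 (y - x2) : ℝ) - τ2 / 2 * ‖y - x2‖ ^ 2 : ℝ) : EReal) ≤ g y :=
    prox_ineq g τ2 hτ2 x2 g2 hmin2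
  -- finiteness of f x1, g x2
  have hft1 : f x1 ≠ ⊤ := by
    obtain ⟨y0, hy0⟩ := hftop
    intro h
    have h1 := hmin1 y0
    rw [h, EReal.coe_add_top, top_le_iff] at h1
    apply hy0
    by_contra hne
    rw [← EReal.coe_toReal hne (hfbot y0), ← EReal.coe_add] at h1
    exact EReal.coe_ne_top _ h1
  have hgt2 : g x2 ≠ ⊤ := by
    obtain ⟨y0, hy0⟩ := hgtop
    intro h
    have h1 := hmin2 y0
    rw [h, EReal.coe_add_top, top_le_iff] at h1
    apply hy0
    by_contra hne
    rw [← EReal.coe_toReal hne (hgbot y0), ← EReal.coe_add] at h1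
    exact EReal.coe_ne_top _ h1
  set r1 : ℝ := (f x1).toReal with hr1def
  set r2 : ℝ := (g x2).toReal with hr2def
  have hr1 : f x1 = (r1 : EReal) := (EReal.coe_toReal hft1 (hfbot x1)).symm
  have hr2 : g x2 = (r2 : EReal) := (EReal.coe_toReal hgt2 (hgbot x2)).symm
  -- gradient decompositions
  have hg1 : ∀ w : EuclideanSpace ℝ (Fin d1), (inner ℝ g1 w : ℝ) = D (prodMk w (0 : EuclideanSpace ℝ (Fin d2))) := fun w =>
    partial_grad_fst H hH x1 x2 w
  have hg2 : ∀ w : EuclideanSpace ℝ (Fin d2), (inner ℝ g2 w : ℝ) = D (prodMk (0 : EuclideanSpace ℝ (Fin d1)) w) := fun w =>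
    partial_grad_snd H hH x1 x2 w
  refine ⟨fun _ => xb, fun _ => 0, tendsto_const_nhds, tendsto_const_nhds, fun k => ?_⟩
  intro ε hε
  have hHd : HasFDerivAt H D xb := (hH.differentiable one_ne_zero xb).hasFDerivAt
  have hev1 := hHd.isLittleO.def (show (0:ℝ) < ε / 2 by positivity)
  set δ : ℝ := ε / (τ1 + τ2) with hδdef
  have hδ : 0 < δ := by positivity
  have hev2 : ∀ᶠ p in nhds xb, ‖p - xb‖ < δ := by
    have := Metric.ball_mem_nhds xb hδ
    filter_upwards [this] with p hp
    rwa [Metric.mem_ball, dist_eq_norm] at hp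
  filter_upwards [hev1, hev2] with p h1 h2
  set Δ1 : EuclideanSpace ℝ (Fin d1) := p.fst - x1 with hΔ1
  set Δ2 : EuclideanSpace ℝ (Fin d2) := p.snd - x2 with hΔ2
  have hΔ : p - xb = prodMk Δ1 Δ2 := sub_prodMk p x1 x2
  have hDval : D (p - xb) = (inner ℝ g1 Δ1 : ℝ) + (inner ℝ g2 Δ2 : ℝ) := by
    rw [hΔ, prodMk_add_prodMk, map_add, hg1, hg2]
  have hsq : ‖p - xb‖ ^ 2 = ‖Δ1‖ ^ 2 + ‖Δ2‖ ^ 2 := by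
    rw [hΔ, norm_sq_prodMk]
  -- the real inequality
  set a1 : ℝ := -(inner ℝ g1 Δ1 : ℝ) - τ1 / 2 * ‖Δ1‖ ^ 2 with ha1
  set a2 : ℝ := -(inner ℝ g2 Δ2 : ℝ) - τ2 / 2 * ‖Δ2‖ ^ 2 with ha2
  have hb : |H p - H xb - D (p - xb)| ≤ ε / 2 * ‖p - xb‖ := by
    have := h1
    rwa [Real.norm_eq_abs] at this
  have hδmul : (τ1 + τ2) * δ = ε := by
    rw [hδdef]; field_simp
  have hreal : H xb + r1 + r2 + ((inner ℝ (0 : WithLp 2 (EuclideanSpace ℝ (Fin d1) × EuclideanSpace ℝ (Fin d2))) (p - xb) : ℝ) - ε * ‖p - xb‖)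
      ≤ H p + (r1 + a1) + (r2 + a2) := by
    have hprod : ‖p - xb‖ ^ 2 ≤ δ * ‖p - xb‖ := by
      rw [sq]; exact mul_le_mul_of_nonneg_right h2.le (norm_nonneg _)
    have hδn : (τ1 + τ2) * (δ * ‖p - xb‖) = ε * ‖p - xb‖ := by rw [← mul_assoc, hδmul]
    have hquad : τ1 / 2 * ‖Δ1‖ ^ 2 + τ2 / 2 * ‖Δ2‖ ^ 2 ≤ ε / 2 * ‖p - xb‖ := by
      nlinarith [mul_nonneg hτ1.le (sq_nonneg ‖Δ2‖), mul_nonneg hτ2.le (sq_nonneg ‖Δ1‖),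
        mul_le_mul_of_nonneg_left hprod (by positivity : (0:ℝ) ≤ (τ1 + τ2) / 2), hsq, hδn]
    rw [inner_zero_left]
    rw [hDval] at hb
    have hb1 := (abs_le.mp hb).1
    rw [ha1, ha2]
    linarith [hb1, hquad]
  -- assemble in EReal
  simp only [hxb, prodMk, WithLp.equiv_apply, WithLp.ofLp_fst, WithLp.ofLp_snd, Equiv.apply_symm_apply]
  rw [hr1, hr2]
  have step1 : ((r1 + a1 : ℝ) : EReal) ≤ f p.fst := by
    have := key1 p.fst
    rw [hr1, ← EReal.coe_add] at this
    exact this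
  have step2 : ((r2 + a2 : ℝ) : EReal) ≤ g p.snd := by
    have := key2 p.snd
    rw [hr2, ← EReal.coe_add] at this
    exact this
  calc (H xb : EReal) + (r1 : EReal) + (r2 : EReal)
        + (((inner ℝ (0 : WithLp 2 (EuclideanSpace ℝ (Fin d1) × EuclideanSpace ℝ (Fin d2))) (p - xb) : ℝ) - ε * ‖p - xb‖ : ℝ) : EReal)
      = ((H xb + r1 + r2
          + ((inner ℝ (0 : WithLp 2 (EuclideanSpace ℝ (Fin d1) × EuclideanSpace ℝ (Fin d2))) (p - xb) : ℝ) - ε * ‖p - xb‖) : ℝ) : EReal) := by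
        norm_cast
    _ ≤ ((H p + (r1 + a1) + (r2 + a2) : ℝ) : EReal) := EReal.coe_le_coe_iff.mpr hreal
    _ = (H p : EReal) + ((r1 + a1 : ℝ) : EReal) + ((r2 + a2 : ℝ) : EReal) := by norm_cast
    _ ≤ (H p : EReal) + f p.fst + g p.snd :=
        add_le_add (add_le_add le_rfl step1) step2
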